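/- For all complex numbers x, y and every nonnegative integer n, (x + y)·p_{2n,μ}(x,y) = p_{2n+1,μ}(x,y). -/

import Mathlib

open Finset

/-- The μ-deformed factorial function γ_μ. -/
noncomputable def gammaMu (μ : ℝ) : ℕ → ℝ
  | 0 => 1
  | n + 1 => ((n + 1 : ℝ) + 2 * μ * (if Odd (n + 1) then 1 else 0)) * gammaMu μ n

/-- The μ-deformed binomial coefficient C_μ(n,k), zero outside 0 ≤ k ≤ n. -/
noncomputable def binomMu (μ : ℝ) (n : ℕ) (k : ℤ) : ℝ :=
  if 0 ≤ k ∧ k ≤ (n : ℤ) then gammaMu μ n / (gammaMu μ (n - k.toNat) * gammaMu μ k.toNat) else 0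

/-- The n-th μ-deformed binomial polynomial p_{n,μ}(x,y). -/
noncomputable def pMu (μ : ℝ) (n : ℕ) (x y : ℂ) : ℂ :=
  ∑ k ∈ Finset.range (n + 1), (binomMu μ n k : ℂ) * x ^ k * y ^ (n - k)

/-- The μ-deformed exponential function. -/
noncomputable def expMu (μ : ℝ) (z : ℂ) : ℂ :=
  ∑' n : ℕ, z ^ n / (gammaMu μ n : ℂ)

/-- The Bessel function of the first kind of order ν, for positive real argument. -/
noncomputable def besselJ (ν x : ℝ) : ℝ :=
  ∑' m : ℕ, ((-1) ^ m / (Nat.factorial m * Real.Gamma (ν + m + 1))) * (x / 2) ^ ((2 * m : ℝ) + ν)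

lemma gammaMu_succ (μ : ℝ) (n : ℕ) :
    gammaMu μ (n+1) = ((n + 1 : ℝ) + 2 * μ * (if Odd (n + 1) then 1 else 0)) * gammaMu μ n := rfl

lemma gammaMu_pos (μ : ℝ) (hμ : -(1/2 : ℝ) < μ) (n : ℕ) : 0 < gammaMu μ n := by
  induction n with
  | zero => norm_num [gammaMu]
  | succ n ih =>
    rw [gammaMu_succ]
    apply mul_pos _ ih
    have : (0:ℝ) ≤ n := Nat.cast_nonneg n
    split <;> nlinarith

lemma frac_abstract (f1 f2 A B C : ℝ) (hf1 : f1 ≠ 0) (hf2 : f2 ≠ 0) (hB : B ≠ 0) (hC : C ≠ 0) :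
    (f1 + f2) * A / ((f2 * B) * (f1 * C)) = A / ((f2 * B) * C) + A / (B * (f1 * C)) := by
  field_simp

lemma key (μ : ℝ) (hμ : -(1/2 : ℝ) < μ) (m a : ℕ)
    (hpar : (if Odd (m+1) then (1:ℝ) else 0) + (if Odd (a+1) then 1 else 0) = 1)
    (hodd : Odd (m+1+a+1)) :
    gammaMu μ (m+1+a+1) / (gammaMu μ (a+1) * gammaMu μ (m+1)) =
      gammaMu μ (m+1+a) / (gammaMu μ (a+1) * gammaMu μ m)
      + gammaMu μ (m+1+a) / (gammaMu μ a * gammaMu μ (m+1)) := by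
  have hm := gammaMu_pos μ hμ m
  have ha := gammaMu_pos μ hμ a
  have hma := gammaMu_pos μ hμ (m+1+a)
  rw [gammaMu_succ μ (m+1+a), if_pos hodd, gammaMu_succ μ a, gammaMu_succ μ m]
  push_cast
  by_cases h1 : Odd (m+1)
  · rw [if_pos h1] at hpar ⊢
    have h2 : ¬ Odd (a+1) := by
      by_contra h2; rw [if_pos h2] at hpar; norm_num at hpar
    rw [if_neg h2] at hpar ⊢
    have hm0 : (0:ℝ) ≤ m := Nat.cast_nonneg m
    have ha0 : (0:ℝ) ≤ a := Nat.cast_nonneg a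
    have hf1 : ((m:ℝ) + 1 + 2*μ*1) ≠ 0 := by nlinarith
    have hf2 : ((a:ℝ) + 1 + 2*μ*0) ≠ 0 := by nlinarith
    rw [show ((m:ℝ) + 1 + (a:ℝ) + 1 + 2*μ*1) = ((m:ℝ) + 1 + 2*μ*1) + ((a:ℝ) + 1 + 2*μ*0) by ring]
    exact frac_abstract _ _ _ _ _ hf1 hf2 ha.ne' hm.ne' 
  · rw [if_neg h1] at hpar ⊢
    have h2 : Odd (a+1) := by
      by_contra h2; rw [if_neg h2] at hpar; norm_num at hpar
    rw [if_pos h2]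
    have hm0 : (0:ℝ) ≤ m := Nat.cast_nonneg m
    have ha0 : (0:ℝ) ≤ a := Nat.cast_nonneg a
    have hf1 : ((m:ℝ) + 1 + 2*μ*0) ≠ 0 := by nlinarith
    have hf2 : ((a:ℝ) + 1 + 2*μ*1) ≠ 0 := by nlinarith
    rw [show ((m:ℝ) + 1 + (a:ℝ) + 1 + 2*μ*1) = ((m:ℝ) + 1 + 2*μ*0) + ((a:ℝ) + 1 + 2*μ*1) by ring]
    exact frac_abstract _ _ _ _ _ hf1 hf2 ha.ne' hm.ne' 

lemma gammaMu_ne (μ : ℝ) (hμ : -(1/2 : ℝ) < μ) (n : ℕ) : gammaMu μ n ≠ 0 :=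
  (gammaMu_pos μ hμ n).ne'

lemma pascal (μ : ℝ) (hμ : -(1/2 : ℝ) < μ) (n : ℕ) (k : ℤ) :
    binomMu μ (2*n+1) k = binomMu μ (2*n) (k-1) + binomMu μ (2*n) k := by
  by_cases hk0 : k < 0
  · rw [binomMu, if_neg (by omega), binomMu, if_neg (by omega), binomMu, if_neg (by omega)]
    norm_num
  push_neg at hk0
  obtain ⟨j, rfl⟩ : ∃ j : ℕ, k = (j : ℤ) := ⟨k.toNat, (Int.toNat_of_nonneg hk0).symm⟩
  by_cases hj0 : j = 0
  · subst hj0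
    rw [binomMu, if_pos (by omega), binomMu, if_neg (by omega), binomMu, if_pos (by omega)]
    simp [gammaMu, div_self (gammaMu_ne μ hμ (2*n+1)), div_self (gammaMu_ne μ hμ (2*n))]
    have h1 : (0:ℝ) < 2 * (n:ℝ) + 1 + 2 * μ := by nlinarith [Nat.cast_nonneg (α := ℝ) n]
    exact ⟨h1.ne', gammaMu_ne μ hμ (2*n)⟩
  by_cases hj2 : j ≤ 2*n
  · -- main case
    obtain ⟨m, rfl⟩ : ∃ m : ℕ, j = m + 1 := ⟨j - 1, by omega⟩
    obtain ⟨a, h2n⟩ : ∃ a : ℕ, 2*n = m + 1 + a := ⟨2*n - (m+1), by omega⟩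
    rw [binomMu, if_pos (by constructor <;> omega), binomMu, if_pos (by constructor <;> omega),
        binomMu, if_pos (by constructor <;> omega)]
    rw [show ((m+1 : ℕ) : ℤ) - 1 = ((m : ℕ) : ℤ) by push_cast; ring]
    simp only [Int.toNat_natCast]
    rw [show 2*n+1 - (m+1) = a+1 by omega, show 2*n - m = a+1 by omega,
        show 2*n - (m+1) = a by omega, h2n]
    have hpar : (if Odd (m+1) then (1:ℝ) else 0) + (if Odd (a+1) then 1 else 0) = 1 := by
      by_cases hodd : Odd (m+1)
      · rw [if_pos hodd, if_neg (by rw [Nat.odd_iff] at hodd ⊢; omega)]; norm_num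
      · rw [if_neg hodd, if_pos (by rw [Nat.odd_iff] at hodd ⊢; omega)]; norm_num
    exact key μ hμ m a hpar (by rw [Nat.odd_iff]; omega)
  by_cases hj3 : j = 2*n+1
  · subst hj3
    rw [binomMu, if_pos (by constructor <;> omega), binomMu, if_pos (by constructor <;> push_cast <;> omega),
        binomMu, if_neg (by push_cast; omega)]
    rw [show ((2*n+1 : ℕ) : ℤ) - 1 = ((2*n : ℕ) : ℤ) by push_cast; ring]
    simp only [Int.toNat_natCast]
    simp [gammaMu, div_self (gammaMu_ne μ hμ (2*n+1)), div_self (gammaMu_ne μ hμ (2*n))]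
    have h1 : (0:ℝ) < 2 * (n:ℝ) + 1 + 2 * μ := by nlinarith [Nat.cast_nonneg (α := ℝ) n]
    exact ⟨h1.ne', gammaMu_ne μ hμ (2*n)⟩
  · rw [binomMu, if_neg (by push_cast; omega), binomMu, if_neg (by push_cast; omega),
        binomMu, if_neg (by push_cast; omega)]
    norm_num

theorem pMu_mul_even (μ : ℝ) (hμ : -(1/2 : ℝ) < μ) (n : ℕ) (x y : ℂ) :
    (x + y) * pMu μ (2 * n) x y = pMu μ (2 * n + 1) x y := by
  have hc : ∀ k : ℕ, (binomMu μ (2*n+1) (k:ℤ) : ℂ)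
      = (binomMu μ (2*n) ((k:ℤ)-1) : ℂ) + (binomMu μ (2*n) (k:ℤ) : ℂ) := by
    intro k
    exact_mod_cast congrArg (fun t : ℝ => (t : ℂ)) (pascal μ hμ n k)
  have hsplit : ∑ k ∈ range (2*n+1+1), (binomMu μ (2*n+1) (k:ℤ) : ℂ) * x^k * y^(2*n+1-k)
      = (∑ k ∈ range (2*n+1+1), (binomMu μ (2*n) ((k:ℤ)-1) : ℂ) * x^k * y^(2*n+1-k))
        + ∑ k ∈ range (2*n+1+1), (binomMu μ (2*n) (k:ℤ) : ℂ) * x^k * y^(2*n+1-k) := by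
    rw [← Finset.sum_add_distrib]
    refine Finset.sum_congr rfl fun k _ => ?_
    rw [hc k]; ring
  have h1 : (∑ k ∈ range (2*n+1+1), (binomMu μ (2*n) ((k:ℤ)-1) : ℂ) * x^k * y^(2*n+1-k))
      = x * ∑ k ∈ range (2*n+1), (binomMu μ (2*n) (k:ℤ) : ℂ) * x^k * y^(2*n-k) := by
    rw [Finset.sum_range_succ', Finset.mul_sum]
    rw [show ((binomMu μ (2*n) (((0:ℕ):ℤ)-1) : ℂ)) * x^0 * y^(2*n+1-0) = 0 by
      rw [binomMu, if_neg (by omega)]; simp]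
    rw [add_zero]
    refine Finset.sum_congr rfl fun k _ => ?_
    rw [show (((k+1:ℕ):ℤ)-1) = (k:ℤ) by push_cast; ring,
        show 2*n+1-(k+1) = 2*n-k by omega]
    ring
  have h2 : (∑ k ∈ range (2*n+1+1), (binomMu μ (2*n) (k:ℤ) : ℂ) * x^k * y^(2*n+1-k))
      = y * ∑ k ∈ range (2*n+1), (binomMu μ (2*n) (k:ℤ) : ℂ) * x^k * y^(2*n-k) := by
    rw [Finset.sum_range_succ, Finset.mul_sum]
    rw [show ((binomMu μ (2*n) ((2*n+1:ℕ):ℤ) : ℂ)) * x^(2*n+1) * y^(2*n+1-(2*n+1)) = 0 by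
      rw [binomMu, if_neg (by push_cast; omega)]; simp]
    rw [add_zero]
    refine Finset.sum_congr rfl fun k hk => ?_
    rw [Finset.mem_range] at hk
    rw [show 2*n+1-k = (2*n-k)+1 by omega]
    ring
  simp only [pMu]
  rw [hsplit, h1, h2]
  ring
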